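/- The kernel of the group homomorphism α : Sp(4,ℝ) → O(Ψ^⊥, b₀) induced by the conjugation action M ↦ gMgᵀ on Skew(4,ℝ) restricted to Ψ^⊥ is exactly {±1₄}. -/

import Mathlib

open Matrix

noncomputable def Psi : Matrix (Fin 4) (Fin 4) ℝ :=
  !![0,0,1,0; 0,0,0,1; -1,0,0,0; 0,-1,0,0]

noncomputable def b0 (M N : Matrix (Fin 4) (Fin 4) ℝ) : ℝ :=
  (1/2) * (M * Psi * N * Psi).trace - (1/4) * (M * Psi).trace * (N * Psi).trace

lemma aux_comm (g M : Matrix (Fin 4) (Fin 4) ℝ) (hg : gᵀ * Psi * g = Psi)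
    (h : g * M * gᵀ = M) : g * M * Psi = M * Psi * g := by
  calc g * M * Psi = g * M * (gᵀ * Psi * g) := by rw [hg]
    _ = (g * M * gᵀ) * Psi * g := by simp only [mul_assoc]
    _ = M * Psi * g := by rw [h]

set_option maxHeartbeats 1000000 in
/-- the kernel of α : Sp(4,ℝ) → O(Ψ^⊥, b₀), g acting by
M ↦ g M gᵀ on Ψ^⊥ ⊂ Skew(4,ℝ), is exactly {±1}. -/
theorem kernel_of_alpha_is_pm_one
    (g : Matrix (Fin 4) (Fin 4) ℝ) (hg : gᵀ * Psi * g = Psi) :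
    (∀ M : Matrix (Fin 4) (Fin 4) ℝ, Mᵀ = -M → b0 M Psi = 0 → g * M * gᵀ = M) ↔
      g = 1 ∨ g = -1 := by
  constructor
  · intro h
    have s1 : (!![0,1,0,0; -1,0,0,0; 0,0,0,0; 0,0,0,0] : Matrix (Fin 4) (Fin 4) ℝ)ᵀ
        = -!![0,1,0,0; -1,0,0,0; 0,0,0,0; 0,0,0,0] := by
      ext i j; fin_cases i <;> fin_cases j <;> norm_num
    have b1 : b0 !![0,1,0,0; -1,0,0,0; 0,0,0,0; 0,0,0,0] Psi = 0 := by
      norm_num [b0, Psi, Matrix.trace, Matrix.diag, Fin.sum_univ_four, Matrix.mul_apply,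
        Matrix.vecHead, Matrix.vecTail, Function.comp, Matrix.cons_val_two, Matrix.cons_val_three]
    have E1 := Matrix.ext_iff.mpr (aux_comm g _ hg (h _ s1 b1))
    have s2 : (!![0,0,0,0; 0,0,0,0; 0,0,0,1; 0,0,-1,0] : Matrix (Fin 4) (Fin 4) ℝ)ᵀ
        = -!![0,0,0,0; 0,0,0,0; 0,0,0,1; 0,0,-1,0] := by
      ext i j; fin_cases i <;> fin_cases j <;> norm_num
    have b2 : b0 !![0,0,0,0; 0,0,0,0; 0,0,0,1; 0,0,-1,0] Psi = 0 := by
      norm_num [b0, Psi, Matrix.trace, Matrix.diag, Fin.sum_univ_four, Matrix.mul_apply,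
        Matrix.vecHead, Matrix.vecTail, Function.comp, Matrix.cons_val_two, Matrix.cons_val_three]
    have E2 := Matrix.ext_iff.mpr (aux_comm g _ hg (h _ s2 b2))
    have s3 : (!![0,0,0,1; 0,0,0,0; 0,0,0,0; -1,0,0,0] : Matrix (Fin 4) (Fin 4) ℝ)ᵀ
        = -!![0,0,0,1; 0,0,0,0; 0,0,0,0; -1,0,0,0] := by
      ext i j; fin_cases i <;> fin_cases j <;> norm_num
    have b3 : b0 !![0,0,0,1; 0,0,0,0; 0,0,0,0; -1,0,0,0] Psi = 0 := by
      norm_num [b0, Psi, Matrix.trace, Matrix.diag, Fin.sum_univ_four, Matrix.mul_apply,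
        Matrix.vecHead, Matrix.vecTail, Function.comp, Matrix.cons_val_two, Matrix.cons_val_three]
    have E3 := Matrix.ext_iff.mpr (aux_comm g _ hg (h _ s3 b3))
    have s5 : (!![0,0,1,0; 0,0,0,-1; -1,0,0,0; 0,1,0,0] : Matrix (Fin 4) (Fin 4) ℝ)ᵀ
        = -!![0,0,1,0; 0,0,0,-1; -1,0,0,0; 0,1,0,0] := by
      ext i j; fin_cases i <;> fin_cases j <;> norm_num
    have b5 : b0 !![0,0,1,0; 0,0,0,-1; -1,0,0,0; 0,1,0,0] Psi = 0 := by
      norm_num [b0, Psi, Matrix.trace, Matrix.diag, Fin.sum_univ_four, Matrix.mul_apply,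
        Matrix.vecHead, Matrix.vecTail, Function.comp, Matrix.cons_val_two, Matrix.cons_val_three]
    have E5 := Matrix.ext_iff.mpr (aux_comm g _ hg (h _ s5 b5))
    -- off-parity zeros from E5
    have z01 : g 0 1 = 0 := by
      have t := E5 0 1; norm_num [Psi, Matrix.mul_apply, Fin.sum_univ_four, Matrix.vecHead, Matrix.vecTail, Function.comp, Matrix.cons_val_two, Matrix.cons_val_three] at t; linarith
    have z03 : g 0 3 = 0 := by
      have t := E5 0 3; norm_num [Psi, Matrix.mul_apply, Fin.sum_univ_four, Matrix.vecHead, Matrix.vecTail, Function.comp, Matrix.cons_val_two, Matrix.cons_val_three] at t; linarith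
    have z10 : g 1 0 = 0 := by
      have t := E5 1 0; norm_num [Psi, Matrix.mul_apply, Fin.sum_univ_four, Matrix.vecHead, Matrix.vecTail, Function.comp, Matrix.cons_val_two, Matrix.cons_val_three] at t; linarith
    have z12 : g 1 2 = 0 := by
      have t := E5 1 2; norm_num [Psi, Matrix.mul_apply, Fin.sum_univ_four, Matrix.vecHead, Matrix.vecTail, Function.comp, Matrix.cons_val_two, Matrix.cons_val_three] at t; linarith
    have z21 : g 2 1 = 0 := by
      have t := E5 2 1; norm_num [Psi, Matrix.mul_apply, Fin.sum_univ_four, Matrix.vecHead, Matrix.vecTail, Function.comp, Matrix.cons_val_two, Matrix.cons_val_three] at t; linarith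
    have z23 : g 2 3 = 0 := by
      have t := E5 2 3; norm_num [Psi, Matrix.mul_apply, Fin.sum_univ_four, Matrix.vecHead, Matrix.vecTail, Function.comp, Matrix.cons_val_two, Matrix.cons_val_three] at t; linarith
    have z30 : g 3 0 = 0 := by
      have t := E5 3 0; norm_num [Psi, Matrix.mul_apply, Fin.sum_univ_four, Matrix.vecHead, Matrix.vecTail, Function.comp, Matrix.cons_val_two, Matrix.cons_val_three] at t; linarith
    have z32 : g 3 2 = 0 := by
      have t := E5 3 2; norm_num [Psi, Matrix.mul_apply, Fin.sum_univ_four, Matrix.vecHead, Matrix.vecTail, Function.comp, Matrix.cons_val_two, Matrix.cons_val_three] at t; linarith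
    have z20 : g 2 0 = 0 := by
      have t := E1 2 3; norm_num [Psi, Matrix.mul_apply, Fin.sum_univ_four, Matrix.vecHead, Matrix.vecTail, Function.comp, Matrix.cons_val_two, Matrix.cons_val_three] at t; linarith
    have z31 : g 3 1 = 0 := by
      have t := E1 0 1; norm_num [Psi, Matrix.mul_apply, Fin.sum_univ_four, Matrix.vecHead, Matrix.vecTail, Function.comp, Matrix.cons_val_two, Matrix.cons_val_three] at t; linarith
    have z02 : g 0 2 = 0 := by
      have t := E2 0 1; norm_num [Psi, Matrix.mul_apply, Fin.sum_univ_four, Matrix.vecHead, Matrix.vecTail, Function.comp, Matrix.cons_val_two, Matrix.cons_val_three] at t; linarith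
    have z13 : g 1 3 = 0 := by
      have t := E2 1 0; norm_num [Psi, Matrix.mul_apply, Fin.sum_univ_four, Matrix.vecHead, Matrix.vecTail, Function.comp, Matrix.cons_val_two, Matrix.cons_val_three] at t; linarith
    have d33 : g 3 3 = g 0 0 := by
      have t := E1 0 3; norm_num [Psi, Matrix.mul_apply, Fin.sum_univ_four, Matrix.vecHead, Matrix.vecTail, Function.comp, Matrix.cons_val_two, Matrix.cons_val_three] at t; linarith
    have d22 : g 2 2 = g 1 1 := by
      have t := E1 1 2; norm_num [Psi, Matrix.mul_apply, Fin.sum_univ_four, Matrix.vecHead, Matrix.vecTail, Function.comp, Matrix.cons_val_two, Matrix.cons_val_three] at t; linarith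
    have d11 : g 1 1 = g 0 0 := by
      have t := E3 0 1; norm_num [Psi, Matrix.mul_apply, Fin.sum_univ_four, Matrix.vecHead, Matrix.vecTail, Function.comp, Matrix.cons_val_two, Matrix.cons_val_three] at t; linarith
    have hsq : g 0 0 * g 0 0 = 1 := by
      have q := Matrix.ext_iff.mpr hg 0 2
      norm_num [Psi, Matrix.mul_apply, Matrix.transpose_apply, Fin.sum_univ_four, Matrix.vecHead, Matrix.vecTail, Function.comp, Matrix.cons_val_two, Matrix.cons_val_three,
        z01, z02, z03, z10, z12, z13, z20, z21, z23, z30, z31, z32, d11, d22, d33] at q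
      linarith [q]
    have hgs : g = (g 0 0) • (1 : Matrix (Fin 4) (Fin 4) ℝ) := by
      ext i j
      fin_cases i <;> fin_cases j <;>
        simp [Matrix.smul_apply, Matrix.one_apply, z01, z02, z03, z10, z12, z13,
          z20, z21, z23, z30, z31, z32, d11, d22, d33]
    rcases mul_self_eq_one_iff.mp hsq with hc | hc
    · left; rw [hgs, hc, one_smul]
    · right; rw [hgs, hc]; ext i j; simp [Matrix.one_apply, Matrix.neg_apply, apply_ite]
  · rintro (rfl | rfl) M hM hb
    · simp
    · simp [Matrix.transpose_neg, Matrix.transpose_one, neg_mul, mul_neg, neg_neg]
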